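/- Let K be a compact abelian group with Haar probability measure m, f : K → [0,1] measurable with ∫ f dm > 0, d ≥ 1, and c_1,…,c_{d−1} ∈ ℤ. Then the function φ(t) := ∫_{K^d} f(k+c_d s_1) f(k+c_d s_2) ⋯ f(k+c_d s_{d−1}) f(k + t − Σ_{i=1}^{d−1} c_i s_i) dm(k) dm(s_1) ⋯ dm(s_{d−1}) satisfies φ(0) > 0. -/

import Mathlib

open MeasureTheory

/-- Telescoping bound: if all `a i, b i ∈ [0,1]`, then
`|∏ a - ∏ b| ≤ ∑ |a i - b i|`. -/
lemma stmt12_abs_prod_sub_prod_le {ι : Type*} (s : Finset ι) (a b : ι → ℝ)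
    (ha : ∀ i, a i ∈ Set.Icc (0:ℝ) 1) (hb : ∀ i, b i ∈ Set.Icc (0:ℝ) 1) :
    |(∏ i ∈ s, a i) - ∏ i ∈ s, b i| ≤ ∑ i ∈ s, |a i - b i| := by
  classical
  induction s using Finset.induction_on with
  | empty => simp
  | insert _ _ hj ih =>
    rename_i j s
    rw [Finset.prod_insert hj, Finset.prod_insert hj, Finset.sum_insert hj]
    have hQ : |∏ i ∈ s, b i| ≤ 1 := by
      rw [abs_of_nonneg (Finset.prod_nonneg fun i _ => (hb i).1)]
      exact Finset.prod_le_one (fun i _ => (hb i).1) fun i _ => (hb i).2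
    have haj : |a j| ≤ 1 := abs_le.2 ⟨by linarith [(ha j).1], (ha j).2⟩
    have key : a j * ∏ i ∈ s, a i - b j * ∏ i ∈ s, b i
        = a j * ((∏ i ∈ s, a i) - ∏ i ∈ s, b i) + (a j - b j) * ∏ i ∈ s, b i := by
      ring
    rw [key]
    calc |a j * ((∏ i ∈ s, a i) - ∏ i ∈ s, b i) + (a j - b j) * ∏ i ∈ s, b i|
        ≤ |a j * ((∏ i ∈ s, a i) - ∏ i ∈ s, b i)| + |(a j - b j) * ∏ i ∈ s, b i| :=
          abs_add_le _ _
      _ = |a j| * |(∏ i ∈ s, a i) - ∏ i ∈ s, b i| + |a j - b j| * |∏ i ∈ s, b i| := by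
          rw [abs_mul, abs_mul]
      _ ≤ 1 * (∑ i ∈ s, |a i - b i|) + |a j - b j| * 1 := by
          have h1 : |a j| * |(∏ i ∈ s, a i) - ∏ i ∈ s, b i| ≤ 1 * (∑ i ∈ s, |a i - b i|) :=
            mul_le_mul haj ih (abs_nonneg _) zero_le_one
          have h2 : |a j - b j| * |∏ i ∈ s, b i| ≤ |a j - b j| * 1 :=
            mul_le_mul_of_nonneg_left hQ (abs_nonneg _)
          linarith
      _ = |a j - b j| + ∑ i ∈ s, |a i - b i| := by ring

/-- A compact subset of an open subset of a (finite) product can be sandwiched by a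
finite union of measurable boxes. -/
lemma stmt12_exists_box_sandwich {n : ℕ} {K : Type*} [TopologicalSpace K]
    [MeasurableSpace K] [OpensMeasurableSpace K]
    (C O : Set (Fin n → K)) (hC : IsCompact C) (hO : IsOpen O) (hCO : C ⊆ O) :
    ∃ S : Set (Fin n → K), MeasurableSet S ∧ C ⊆ S ∧ S ⊆ O := by
  classical
  choose! I u hu hsub using fun x (hx : x ∈ C) => isOpen_pi_iff.mp hO x (hCO hx)
  have hboxmeas : ∀ x ∈ C, MeasurableSet ((↑(I x) : Set (Fin n)).pi (u x)) := by
    intro x hx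
    refine MeasurableSet.pi ((I x).countable_toSet) fun i hi => ?_
    exact ((hu x hx i hi).1).measurableSet
  have hboxopen : ∀ x ∈ C, IsOpen ((↑(I x) : Set (Fin n)).pi (u x)) := by
    intro x hx
    exact isOpen_set_pi (I x).finite_toSet fun i hi => (hu x hx i hi).1
  have hcov : C ⊆ ⋃ x ∈ C, (↑(I x) : Set (Fin n)).pi (u x) := by
    intro x hx
    exact Set.mem_biUnion hx fun i hi => (hu x hx i hi).2
  obtain ⟨t, htsub, htfin, htcov⟩ :=
    hC.elim_finite_subcover_image (fun x hx => hboxopen x hx) hcov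
  refine ⟨⋃ x ∈ t, (↑(I x) : Set (Fin n)).pi (u x), ?_, htcov, ?_⟩
  · exact htfin.measurableSet_biUnion fun x hx => hboxmeas x (htsub hx)
  · intro y hy
    obtain ⟨x, hxt, hxy⟩ := Set.mem_iUnion₂.mp hy
    exact hsub x (htsub hxt) hxy

/-- A continuous real-valued function on a finite product of compact spaces is
measurable with respect to the product σ-algebra. -/
lemma stmt12_measurable_of_continuous {n : ℕ} {K : Type*} [TopologicalSpace K]
    [MeasurableSpace K] [OpensMeasurableSpace K] [CompactSpace K]
    (F : (Fin n → K) → ℝ) (hF : Continuous F) : Measurable F := by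
  refine measurable_of_Ioi fun a => ?_
  have hO : IsOpen (F ⁻¹' Set.Ioi a) := (isOpen_Ioi).preimage hF
  have hC : ∀ j : ℕ, IsCompact (F ⁻¹' Set.Ici (a + 1 / (j + 1))) :=
    fun j => (isClosed_Ici.preimage hF).isCompact
  have hCO : ∀ j : ℕ, F ⁻¹' Set.Ici (a + 1 / (j + 1)) ⊆ F ⁻¹' Set.Ioi a := by
    intro j x hx
    simp only [Set.mem_preimage, Set.mem_Ici] at hx
    simp only [Set.mem_preimage, Set.mem_Ioi]
    have : (0:ℝ) < 1 / (j + 1) := by positivity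
    linarith
  choose S hSmeas hCS hSO using fun j =>
    stmt12_exists_box_sandwich _ _ (hC j) hO (hCO j)
  have hrw : F ⁻¹' Set.Ioi a = ⋃ j : ℕ, S j := by
    ext x
    constructor
    · intro hx
      simp only [Set.mem_preimage, Set.mem_Ioi] at hx
      obtain ⟨j, hj⟩ := exists_nat_one_div_lt (sub_pos.2 hx)
      refine Set.mem_iUnion.2 ⟨j, hCS j ?_⟩
      simp only [Set.mem_preimage, Set.mem_Ici]
      linarith
    · intro hx
      obtain ⟨j, hj⟩ := Set.mem_iUnion.mp hx
      exact hSO j hj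
  rw [hrw]
  exact MeasurableSet.iUnion hSmeas

set_option maxHeartbeats 1000000 in
/-- with `n = d - 1`, coefficients `c_1, …, c_{d-1}` given by `c` and
`c_d` by `cd`. -/
theorem stmt12 {K : Type*} [AddCommGroup K] [TopologicalSpace K] [IsTopologicalAddGroup K]
    [CompactSpace K] [MeasurableSpace K] [BorelSpace K]
    (m : Measure K) [m.IsAddHaarMeasure] [IsProbabilityMeasure m]
    (f : K → ℝ) (hf : Measurable f) (hf01 : ∀ x, f x ∈ Set.Icc (0 : ℝ) 1)
    (hfpos : 0 < ∫ x, f x ∂m)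
    (n : ℕ) (c : Fin n → ℤ) (cd : ℤ)
    (φ : K → ℝ)
    (hφ : ∀ t : K, φ t = ∫ s : Fin n → K,
      (∫ k, (∏ i, f (k + cd • s i)) * f (k + t - ∑ i, c i • s i) ∂m)
        ∂(Measure.pi fun _ => m)) :
    0 < φ 0 := by
  classical
  set μn : Measure (Fin n → K) := Measure.pi fun _ => m with hμn
  set G : (Fin n → K) × K → ℝ :=
    fun p => (∏ i, f (p.2 + cd • p.1 i)) * f (p.2 + 0 - ∑ i, c i • p.1 i) with hG
  set F : (Fin n → K) → ℝ :=
    fun s => ∫ k, (∏ i, f (k + cd • s i)) * f (k + 0 - ∑ i, c i • s i) ∂m with hFdef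
  have hφ0 : φ 0 = ∫ s, F s ∂μn := hφ 0
  have hFG : ∀ s, F s = ∫ k, G (s, k) ∂m := fun s => rfl
  -- basic facts about G
  have hG01 : ∀ p, G p ∈ Set.Icc (0:ℝ) 1 := by
    intro p
    constructor
    · exact mul_nonneg (Finset.prod_nonneg fun i _ => (hf01 _).1) (hf01 _).1
    · exact mul_le_one₀ (Finset.prod_le_one (fun i _ => (hf01 _).1) fun i _ => (hf01 _).2)
        (hf01 _).1 (hf01 _).2
  have hGsmeas : ∀ s, Measurable fun k => G (s, k) := by
    intro s
    apply Measurable.mul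
    · apply Finset.measurable_prod
      intro i _
      exact hf.comp (Continuous.measurable (by continuity))
    · exact hf.comp (Continuous.measurable (by continuity))
  -- integrability of bounded measurable functions
  have int_bdd : ∀ (g : K → ℝ) (C : ℝ), Measurable g → (∀ x, |g x| ≤ C) →
      Integrable g m := by
    intro g C hg hb
    exact (integrable_const C).mono' hg.aestronglyMeasurable (Filter.Eventually.of_forall hb)
  have hGint : ∀ s, Integrable (fun k => G (s, k)) m := by
    intro s
    refine int_bdd _ 1 (hGsmeas s) fun x => ?_
    rw [abs_of_nonneg (hG01 (s, x)).1]; exact (hG01 (s, x)).2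
  -- F is nonnegative and bounded
  have hFnonneg : ∀ s, 0 ≤ F s := fun s =>
    integral_nonneg fun k => (hG01 (s, k)).1
  have hFle1 : ∀ s, F s ≤ 1 := by
    intro s
    rw [hFG s]
    calc ∫ k, G (s, k) ∂m ≤ ∫ _, (1:ℝ) ∂m :=
          integral_mono (hGint s) (integrable_const 1) fun k => (hG01 (s, k)).2
      _ = 1 := by simp
  -- F 0 > 0 via Jensen
  have hF0eq : F 0 = ∫ k, f k ^ (n + 1) ∂m := by
    rw [hFdef]
    simp [pow_succ, Finset.prod_const]
  have hfint : Integrable f m := int_bdd f 1 hf fun x =>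
    abs_le.2 ⟨by linarith [(hf01 x).1], (hf01 x).2⟩
  have hfpowint : Integrable (fun x => f x ^ (n + 1)) m := by
    refine int_bdd _ 1 (hf.pow_const _) fun x => ?_
    rw [abs_of_nonneg (pow_nonneg (hf01 x).1 _)]
    exact pow_le_one₀ (hf01 x).1 (hf01 x).2
  have hJensen : (∫ x, f x ∂m) ^ (n + 1) ≤ ∫ x, f x ^ (n + 1) ∂m := by
    have := (convexOn_pow (𝕜 := ℝ) (n + 1)).map_integral_le
      ((continuous_pow (n + 1)).continuousOn) isClosed_Ici
      (Filter.Eventually.of_forall fun x => (hf01 x).1) hfint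
      (by exact hfpowint)
    exact this
  have hF0pos : 0 < F 0 := by
    rw [hF0eq]
    exact lt_of_lt_of_le (pow_pos hfpos (n + 1)) hJensen
  -- translation continuity in L¹
  have hfmem : MemLp f 1 m :=
    MemLp.of_bound hf.aestronglyMeasurable 1
      (Filter.Eventually.of_forall fun x => by
        rw [Real.norm_eq_abs, abs_of_nonneg (hf01 x).1]; exact (hf01 x).2)
  set fL : Lp ℝ 1 m := hfmem.toLp f with hfL
  set addc : C(K × K, K) := ⟨fun p => p.2 + p.1, by fun_prop⟩ with haddc
  set tmap : K → C(K, K) := fun a => (ContinuousMap.curry addc) a with htmap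
  have htmapmp : ∀ a, MeasurePreserving (tmap a) m m := fun a =>
    measurePreserving_add_right m a
  set Φ : K → Lp ℝ 1 m := fun a => Lp.compMeasurePreserving (tmap a) (htmapmp a) fL with hΦ
  have hΦcont : Continuous Φ :=
    Continuous.compMeasurePreservingLp continuous_const
      (ContinuousMap.curry addc).continuous htmapmp (by norm_num)
  have hΦae : ∀ a, (Φ a : K → ℝ) =ᵐ[m] fun x => f (x + a) := by
    intro a
    refine (Lp.coeFn_compMeasurePreserving fL (htmapmp a)).trans ?_
    exact (htmapmp a).quasiMeasurePreserving.ae_eq_comp (hfmem.coeFn_toLp)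
  set D : K → ℝ := fun a => ∫ x, |f (x + a) - f x| ∂m with hD
  have hDeq : ∀ a, D a = ‖Φ a - Φ 0‖ := by
    intro a
    rw [L1.norm_eq_integral_norm]
    refine integral_congr_ae ?_
    filter_upwards [Lp.coeFn_sub (Φ a) (Φ 0), hΦae a, hΦae 0] with x h1 h2 h3
    rw [Real.norm_eq_abs, h1, Pi.sub_apply, h2, h3, add_zero]
  have hDtendsto : Filter.Tendsto D (nhds 0) (nhds 0) := by
    have h : Filter.Tendsto (fun a => ‖Φ a - Φ 0‖) (nhds 0) (nhds 0) := by
      have hc : Continuous fun a : K => ‖Φ a - Φ 0‖ :=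
        (hΦcont.sub (continuous_const : Continuous fun _ : K => Φ 0)).norm
      have h := hc.tendsto (0 : K)
      simpa using h
    exact h.congr fun a => (hDeq a).symm
  have hDnonneg : ∀ a, 0 ≤ D a := fun a => integral_nonneg fun x => abs_nonneg _
  -- translated distances
  have hDtrans : ∀ a b : K, (∫ k, |f (k + a) - f (k + b)| ∂m) = D (a - b) := by
    intro a b
    have h := integral_add_right_eq_self (μ := m) (fun x => |f (x + (a - b)) - f x|) b
    have heq : ∀ k : K, |f (k + b + (a - b)) - f (k + b)| = |f (k + a) - f (k + b)| := by
      intro k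
      congr 2
      abel
    have hrfl : D (a - b) = ∫ x, |f (x + (a - b)) - f x| ∂m := rfl
    rw [hrfl, ← h]
    exact integral_congr_ae (Filter.Eventually.of_forall fun k => (heq k).symm)
  -- pointwise telescoping bound
  have hptwise : ∀ (s s' : Fin n → K) (k : K), |G (s, k) - G (s', k)| ≤
      (∑ i, |f (k + cd • s i) - f (k + cd • s' i)|)
        + |f (k + 0 - ∑ i, c i • s i) - f (k + 0 - ∑ i, c i • s' i)| := by
    intro s s' k
    have hprod : |(∏ i, f (k + cd • s i)) - ∏ i, f (k + cd • s' i)|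
        ≤ ∑ i, |f (k + cd • s i) - f (k + cd • s' i)| :=
      stmt12_abs_prod_sub_prod_le Finset.univ _ _ (fun i => hf01 _) (fun i => hf01 _)
    have hPa : |∏ i, f (k + cd • s i)| ≤ 1 := by
      rw [abs_of_nonneg (Finset.prod_nonneg fun i _ => (hf01 _).1)]
      exact Finset.prod_le_one (fun i _ => (hf01 _).1) fun i _ => (hf01 _).2
    have hfk : |f (k + 0 - ∑ i, c i • s' i)| ≤ 1 := by
      rw [abs_of_nonneg (hf01 _).1]; exact (hf01 _).2
    have hexp : G (s, k) - G (s', k)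
        = ((∏ i, f (k + cd • s i)) - ∏ i, f (k + cd • s' i)) * f (k + 0 - ∑ i, c i • s' i)
          + (∏ i, f (k + cd • s i))
            * (f (k + 0 - ∑ i, c i • s i) - f (k + 0 - ∑ i, c i • s' i)) := by
      rw [hG]; ring
    rw [hexp]
    calc |((∏ i, f (k + cd • s i)) - ∏ i, f (k + cd • s' i)) * f (k + 0 - ∑ i, c i • s' i)
          + (∏ i, f (k + cd • s i))
            * (f (k + 0 - ∑ i, c i • s i) - f (k + 0 - ∑ i, c i • s' i))|
        ≤ |(∏ i, f (k + cd • s i)) - ∏ i, f (k + cd • s' i)| * |f (k + 0 - ∑ i, c i • s' i)|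
          + |∏ i, f (k + cd • s i)|
            * |f (k + 0 - ∑ i, c i • s i) - f (k + 0 - ∑ i, c i • s' i)| := by
          refine (abs_add_le _ _).trans ?_
          rw [abs_mul, abs_mul]
      _ ≤ (∑ i, |f (k + cd • s i) - f (k + cd • s' i)|) * 1
          + 1 * |f (k + 0 - ∑ i, c i • s i) - f (k + 0 - ∑ i, c i • s' i)| := by
          have h1 : |(∏ i, f (k + cd • s i)) - ∏ i, f (k + cd • s' i)|
              * |f (k + 0 - ∑ i, c i • s' i)|
              ≤ (∑ i, |f (k + cd • s i) - f (k + cd • s' i)|) * 1 :=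
            mul_le_mul hprod hfk (abs_nonneg _)
              (Finset.sum_nonneg fun i _ => abs_nonneg _)
          have h2 : |∏ i, f (k + cd • s i)|
              * |f (k + 0 - ∑ i, c i • s i) - f (k + 0 - ∑ i, c i • s' i)|
              ≤ 1 * |f (k + 0 - ∑ i, c i • s i) - f (k + 0 - ∑ i, c i • s' i)| :=
            mul_le_mul_of_nonneg_right hPa (abs_nonneg _)
          linarith
      _ = (∑ i, |f (k + cd • s i) - f (k + cd • s' i)|)
          + |f (k + 0 - ∑ i, c i • s i) - f (k + 0 - ∑ i, c i • s' i)| := by ring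
  -- the key integrated bound
  have hkey : ∀ s s' : Fin n → K, |F s - F s'| ≤
      (∑ i, D (cd • s i - cd • s' i))
        + D ((0 - ∑ i, c i • s i) - (0 - ∑ i, c i • s' i)) := by
    intro s s'
    have habs_bdd : ∀ a b : K, ∀ x : K, |(|f (x + a) - f (x + b)|)| ≤ 2 := by
      intro a b x
      rw [abs_abs]
      calc |f (x + a) - f (x + b)| ≤ |f (x + a)| + |f (x + b)| := abs_sub _ _
        _ ≤ 1 + 1 := by
            gcongr
            · rw [abs_of_nonneg (hf01 _).1]; exact (hf01 _).2
            · rw [abs_of_nonneg (hf01 _).1]; exact (hf01 _).2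
        _ = 2 := by norm_num
    have hterm_meas : ∀ a b : K, Measurable fun x : K => |f (x + a) - f (x + b)| :=
      fun a b => ((hf.comp (measurable_add_const a)).sub
        (hf.comp (measurable_add_const b))).abs
    have hterm_int : ∀ a b : K, Integrable (fun x : K => |f (x + a) - f (x + b)|) m :=
      fun a b => int_bdd _ 2 (hterm_meas a b) (habs_bdd a b)
    have hsum_int : Integrable
        (fun k => ∑ i, |f (k + cd • s i) - f (k + cd • s' i)|) m :=
      integrable_finset_sum _ fun i _ => hterm_int _ _
    have hlast_int : Integrable
        (fun k => |f (k + 0 - ∑ i, c i • s i) - f (k + 0 - ∑ i, c i • s' i)|) m := by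
      have heq : ∀ k : K, |f (k + 0 - ∑ i, c i • s i) - f (k + 0 - ∑ i, c i • s' i)|
          = |f (k + (0 - ∑ i, c i • s i)) - f (k + (0 - ∑ i, c i • s' i))| := by
        intro k
        congr 2 <;> · congr 1; abel
      simp only [heq]
      exact hterm_int _ _
    have h1 : F s - F s' = ∫ k, (G (s, k) - G (s', k)) ∂m := by
      rw [hFG s, hFG s', integral_sub (hGint s) (hGint s')]
    rw [h1]
    calc |∫ k, (G (s, k) - G (s', k)) ∂m|
        ≤ ∫ k, |G (s, k) - G (s', k)| ∂m := by
          simpa [Real.norm_eq_abs] using norm_integral_le_integral_norm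
            (μ := m) (fun k => G (s, k) - G (s', k))
      _ ≤ ∫ k, ((∑ i, |f (k + cd • s i) - f (k + cd • s' i)|)
            + |f (k + 0 - ∑ i, c i • s i) - f (k + 0 - ∑ i, c i • s' i)|) ∂m := by
          exact integral_mono (((hGint s).sub (hGint s')).abs)
            (hsum_int.add hlast_int) (hptwise s s')
      _ = (∫ k, (∑ i, |f (k + cd • s i) - f (k + cd • s' i)|) ∂m)
            + ∫ k, |f (k + 0 - ∑ i, c i • s i) - f (k + 0 - ∑ i, c i • s' i)| ∂m :=
          integral_add hsum_int hlast_int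
      _ = (∑ i, D (cd • s i - cd • s' i))
            + D ((0 - ∑ i, c i • s i) - (0 - ∑ i, c i • s' i)) := by
          congr 1
          · rw [integral_finset_sum _ fun i _ => hterm_int _ _]
            exact Finset.sum_congr rfl fun i _ => hDtrans _ _
          · have heq : ∀ k : K, |f (k + 0 - ∑ i, c i • s i) - f (k + 0 - ∑ i, c i • s' i)|
                = |f (k + (0 - ∑ i, c i • s i)) - f (k + (0 - ∑ i, c i • s' i))| := by
              intro k
              congr 2 <;> · congr 1; abel
            simp only [heq]
            exact hDtrans _ _
  -- F is continuous
  have hFcont : Continuous F := by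
    rw [continuous_iff_continuousAt]
    intro s'
    rw [ContinuousAt, Metric.tendsto_nhds]
    intro ε hε
    -- the bound tends to zero as s → s'
    have hBtendsto : Filter.Tendsto
        (fun s : Fin n → K => (∑ i, D (cd • s i - cd • s' i))
          + D ((0 - ∑ i, c i • s i) - (0 - ∑ i, c i • s' i)))
        (nhds s') (nhds 0) := by
      have h1 : ∀ i : Fin n, Filter.Tendsto
          (fun s : Fin n → K => D (cd • s i - cd • s' i)) (nhds s') (nhds 0) := by
        intro i
        refine hDtendsto.comp ?_
        have : Filter.Tendsto (fun s : Fin n → K => cd • s i - cd • s' i)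
            (nhds s') (nhds (cd • s' i - cd • s' i)) :=
          (((continuous_zsmul cd).comp (continuous_apply i)).sub continuous_const).tendsto s'
        simpa using this
      have h2 : Filter.Tendsto
          (fun s : Fin n → K => D ((0 - ∑ i, c i • s i) - (0 - ∑ i, c i • s' i)))
          (nhds s') (nhds 0) := by
        refine hDtendsto.comp ?_
        have hc : Continuous fun s : Fin n → K =>
            ((0:K) - ∑ i, c i • s i) - (0 - ∑ i, c i • s' i) := by
          refine Continuous.sub (Continuous.sub continuous_const ?_) continuous_const
          exact continuous_finset_sum _ fun i _ =>
            (continuous_zsmul (c i)).comp (continuous_apply i)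
        have := hc.tendsto s'
        simpa using this
      have hsum : Filter.Tendsto
          (fun s : Fin n → K => ∑ i, D (cd • s i - cd • s' i)) (nhds s') (nhds 0) := by
        have := tendsto_finset_sum (Finset.univ : Finset (Fin n)) fun i _ => h1 i
        simpa using this
      simpa using hsum.add h2
    have hev := hBtendsto.eventually_lt_const hε
    refine hev.mono fun x hx => ?_
    rw [Real.dist_eq]
    exact lt_of_le_of_lt (hkey x s') hx
  -- F is measurable w.r.t. the product σ-algebra and integrable
  have hFmeas : Measurable F := stmt12_measurable_of_continuous F hFcont
  have hFint : Integrable F μn := by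
    refine (integrable_const (1:ℝ)).mono' hFmeas.aestronglyMeasurable
      (Filter.Eventually.of_forall fun s => ?_)
    rw [Real.norm_eq_abs, abs_of_nonneg (hFnonneg s)]
    exact hFle1 s
  -- conclude
  rw [hφ0]
  rw [integral_pos_iff_support_of_nonneg hFnonneg hFint]
  have hUopen : IsOpen (F ⁻¹' Set.Ioi 0) := isOpen_Ioi.preimage hFcont
  refine lt_of_lt_of_le (hUopen.measure_pos μn ⟨0, hF0pos⟩) (measure_mono ?_)
  intro s hs
  exact (ne_of_gt hs)
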